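/- Let M_1, ..., M_m be a forward hom-orthogonal sequence of Schurian Λ-modules such that no M_i is isomorphic to the simple module S_j. Then Hom_Λ(M_i, S_j) = 0 for all i. -/

import Mathlib

variable (Λ : Type) [Ring Λ]

open CategoryTheory

/-- A module is Schurian if its endomorphism ring is a division ring:
it is nonzero and every nonzero endomorphism is invertible. -/
def Schurian (M : ModuleCat.{0} Λ) : Prop :=
  Nontrivial M ∧ ∀ f : M ⟶ M, f = 0 ∨ Function.Bijective f

/-- The torsion class `G(M) = ^⊥(M^⊥)` generated by `M` inside the category
of finite-length `Λ`-modules. -/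
def torsionClassOf (M : ModuleCat.{0} Λ) : Set (ModuleCat.{0} Λ) :=
  {N | ∀ P : ModuleCat.{0} Λ, IsFiniteLength Λ P →
    (∀ f : M ⟶ P, f = 0) → ∀ g : N ⟶ P, g = 0}

/-- `X` can be inserted into the sequence `M` at position `k` (after the first `k`
terms) preserving forward hom-orthogonality. -/
def Insertable {m : ℕ} (M : Fin m → ModuleCat.{0} Λ) (X : ModuleCat.{0} Λ)
    (k : ℕ) : Prop :=
  ∀ i : Fin m, ((i : ℕ) < k → ∀ f : M i ⟶ X, f = 0) ∧
    (k ≤ (i : ℕ) → ∀ f : X ⟶ M i, f = 0)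

/-- A forward hom-orthogonal sequence: a sequence of Schurian (finite-length)
modules `M_1, ..., M_m` with `Hom(M_i, M_j) = 0` for `i < j`, such that no
Schurian module `X` lying in the torsion class `G(M_1 ⊕ ⋯ ⊕ M_m)` can be
inserted anywhere into the sequence preserving condition (1). -/
def ForwardHomOrthogonal (m : ℕ) (M : Fin m → ModuleCat.{0} Λ) : Prop :=
  (∀ i, IsFiniteLength Λ (M i)) ∧ (∀ i, Schurian Λ (M i)) ∧
  (∀ i j : Fin m, i < j → ∀ f : M i ⟶ M j, f = 0) ∧
  ¬ ∃ X : ModuleCat.{0} Λ, IsFiniteLength Λ X ∧ Schurian Λ X ∧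
      X ∈ torsionClassOf Λ (ModuleCat.of Λ (∀ i, M i)) ∧
      ∃ k ≤ m, Insertable Λ M X k

/-- A simple module has finite length. -/
lemma simple_isFiniteLength (S : ModuleCat.{0} Λ) (hS : IsSimpleModule Λ S) :
    IsFiniteLength Λ S := by
  have : IsSimpleModule Λ (S ⧸ (⊥ : Submodule Λ S)) :=
    IsSimpleModule.congr ((⊥ : Submodule Λ S).quotEquivOfEqBot rfl)
  exact .of_simple_quotient (N := ⊥) .of_subsingleton

/-- Let `M_1, ..., M_m` be a forward hom-orthogonal sequence of
Schurian `Λ`-modules such that no `M_i` is isomorphic to the simple module `S`.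
Then `Hom_Λ(M_i, S) = 0` for all `i`. -/
theorem stmt_5 (m : ℕ) (M : Fin m → ModuleCat.{0} Λ)
    (hM : ForwardHomOrthogonal Λ m M)
    (S : ModuleCat.{0} Λ) (hS : IsSimpleModule Λ S)
    (hnotiso : ∀ i, ¬ Nonempty (M i ≅ S)) :
    ∀ i, ∀ f : M i ⟶ S, f = 0 := by
  obtain ⟨hFL, hSch, hFwd, hMax⟩ := hM
  by_contra hcon
  push_neg at hcon
  -- the predicate: index n admits a nonzero map to S
  have hex : ∃ n : ℕ, ∃ h : n < m, ∃ f : M ⟨n, h⟩ ⟶ S, f ≠ 0 := by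
    obtain ⟨i, f, hf⟩ := hcon
    exact ⟨i, i.2, by simpa using ⟨f, hf⟩⟩
  classical
  let k := Nat.find hex
  obtain ⟨hk, f0, hf0⟩ := Nat.find_spec hex
  apply hMax
  refine ⟨S, simple_isFiniteLength Λ S hS, ?_, ?_, k, le_of_lt hk |>.trans (le_refl m) |>.trans (le_refl m), ?_⟩
  · -- S is Schurian
    refine ⟨?_, fun g => ?_⟩
    · exact IsSimpleModule.nontrivial Λ S
    · by_cases hg : g = 0
      · exact Or.inl hg
      · exact Or.inr (g.hom.bijective_or_eq_zero.resolve_right (fun h => hg (ModuleCat.hom_ext (by rw [h, ModuleCat.hom_zero]))))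
  · -- S is in the torsion class: it is a quotient of M ⟨k, hk⟩
    intro P hP hzero g
    have hsurj : Function.Surjective f0 :=
      Or.resolve_right (LinearMap.surjective_or_eq_zero
        (show ↑(M ⟨k, hk⟩) →ₗ[Λ] ↑S from f0.hom)) (fun h => hf0 (ModuleCat.hom_ext h))
    have hMkP : ∀ h : M ⟨k, hk⟩ ⟶ P, ∀ x, h x = 0 := by
      intro h x
      have h1 : ((show ↑(M ⟨k, hk⟩) →ₗ[Λ] ↑P from h.hom) ∘ₗ
          LinearMap.proj (R := Λ) (φ := fun i => ↑(M i)) ⟨k, hk⟩) = 0 := congrArg ModuleCat.Hom.hom (hzero (ModuleCat.ofHom _))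
      have h2 := LinearMap.congr_fun h1 (Pi.single ⟨k, hk⟩ x)
      simpa using h2
    ext s
    obtain ⟨x, rfl⟩ := hsurj s
    simpa using hMkP (f0 ≫ g) x
  · -- Insertability at position k
    intro i
    constructor
    · intro hik f
      by_contra hf
      exact Nat.find_min hex (m := (i : ℕ)) hik ⟨i.2, by simpa [Fin.eta] using ⟨f, hf⟩⟩
    · intro hki g
      by_contra hg
      have hinj : Function.Injective g :=
        g.hom.injective_or_eq_zero.resolve_right (fun h => hg (ModuleCat.hom_ext (by rw [h, ModuleCat.hom_zero])))
      -- f0 ≫ g : M k → M i is nonzero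
      obtain ⟨x, hx⟩ : ∃ x, f0 x ≠ 0 := by
        by_contra h
        push_neg at h
        exact hf0 (by ext y; simpa using h y)
      have hcomp : (f0 ≫ g : M ⟨k, hk⟩ ⟶ M i) ≠ 0 := by
        intro h
        have h2 := LinearMap.congr_fun (congrArg ModuleCat.Hom.hom h) x
        simp only [ModuleCat.hom_comp, LinearMap.comp_apply] at h2
        exact hx (hinj (by simpa using h2))
      rcases lt_or_eq_of_le hki with hlt | heq
      · -- k < i contradicts forward orthogonality
        exact hcomp (hFwd ⟨k, hk⟩ i hlt _)
      · -- k = i : then g is surjective hence an iso, contradiction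
        obtain rfl : (⟨k, hk⟩ : Fin m) = i := Fin.ext heq
        rcases hSch ⟨k, hk⟩ with ⟨_, hSch2⟩
        rcases hSch2 (f0 ≫ g) with h0 | hbij
        · exact hcomp h0
        · have hgsurj : Function.Surjective g := by
            intro y
            obtain ⟨z, hz⟩ := hbij.2 y
            exact ⟨f0 z, by simpa using hz⟩
          exact hnotiso _ ⟨(LinearEquiv.ofBijective
            (show ↑S →ₗ[Λ] ↑(M ⟨k, hk⟩) from g.hom) ⟨hinj, hgsurj⟩).toModuleIso.symm⟩
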